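/- Let R be a commutative ring, u: R → U a flat injective ring epimorphism with p.dim_R U ≤ 1 and cokernel K. Then every R-module M admits a special Gen(U)-preenvelope with cokernel a direct sum of copies of K: there is a short exact sequence 0 → M → Z → K^{(α)} → 0 with Z ∈ Gen(U). -/

import Mathlib

universe u

/-- let `u : R → U` be a flat injective ring epimorphism of commutative
rings with `p.dim_R U ≤ 1` (expressed by a length-one projective resolution of `U`) and
`K = U/R`. Then every `R`-module `M` admits a special `Gen(U)`-preenvelope with cokernel
a direct sum of copies of `K`: there is a short exact sequence `0 → M → Z → K^(α) → 0`
with `Z ∈ Gen(U)` (an epimorphic image of a direct sum of copies of `U`). -/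
theorem stmt17 {R : Type u} [CommRing R] {U : Type u} [CommRing U] [Algebra R U]
    [Module.Flat R U]
    (hinj : Function.Injective (algebraMap R U))
    (hepi : Function.Bijective (LinearMap.mul' R U))
    (hpd : ∃ (P₀ P₁ : Type u) (_ : AddCommGroup P₀) (_ : AddCommGroup P₁)
        (_ : Module R P₀) (_ : Module R P₁) (ι : P₁ →ₗ[R] P₀) (p : P₀ →ₗ[R] U),
        Module.Projective R P₀ ∧ Module.Projective R P₁ ∧
        Function.Injective ι ∧ Function.Surjective p ∧
        LinearMap.range ι = LinearMap.ker p)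
    (M : Type u) [AddCommGroup M] [Module R M] :
    ∃ (Z : Type u) (_ : AddCommGroup Z) (_ : Module R Z) (α : Type u)
      (i : M →ₗ[R] Z)
      (q : Z →ₗ[R] (α →₀ (U ⧸ LinearMap.range (Algebra.linearMap R U)))),
      Function.Injective i ∧ Function.Surjective q ∧
      LinearMap.range i = LinearMap.ker q ∧
      ∃ (κ : Type u) (g : (κ →₀ U) →ₗ[R] Z), Function.Surjective g := by
  classical
  set l : R →ₗ[R] U := Algebra.linearMap R U with hl
  set K := U ⧸ LinearMap.range l
  -- free cover of M
  set f : (M →₀ R) →ₗ[R] M := Finsupp.linearCombination R id with hf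
  have hfsurj : Function.Surjective f := Finsupp.linearCombination_id_surjective R M
  -- inclusion R^(M) → U^(M)
  set ι : (M →₀ R) →ₗ[R] (M →₀ U) := Finsupp.mapRange.linearMap l with hι
  have hιinj : Function.Injective ι := by
    intro x y hxy
    ext a
    have := congrArg (fun z => z a) hxy
    simp only [hι, Finsupp.mapRange.linearMap_apply, Finsupp.mapRange_apply] at this
    exact hinj this
  -- pushout
  set w : (M →₀ R) →ₗ[R] M × (M →₀ U) := LinearMap.prod f (-ι) with hw
  set N := LinearMap.range w
  set π := N.mkQ with hπ
  refine ⟨(M × (M →₀ U)) ⧸ N, inferInstance, inferInstance, M,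
    π ∘ₗ LinearMap.inl R M (M →₀ U), ?_, ?_, ?_, ?_, ?_⟩
  · -- the quotient map to K^(M)
    exact N.liftQ ((Finsupp.mapRange.linearMap (LinearMap.range l).mkQ) ∘ₗ
      LinearMap.snd R M (M →₀ U)) (by
        rintro _ ⟨x, rfl⟩
        simp only [LinearMap.mem_ker, LinearMap.comp_apply, hw, LinearMap.prod_apply,
          LinearMap.snd_apply, Pi.prod, LinearMap.neg_apply, map_neg, neg_eq_zero]
        ext a
        simp [hι, Finsupp.mapRange_apply, Submodule.Quotient.mk_eq_zero,
          LinearMap.mem_range])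
  · -- injectivity of i
    rw [← LinearMap.ker_eq_bot]
    rw [LinearMap.ker_eq_bot']
    intro m hm
    simp only [LinearMap.comp_apply, LinearMap.inl_apply, hπ,
      Submodule.mkQ_apply, Submodule.Quotient.mk_eq_zero] at hm
    obtain ⟨x, hx⟩ := hm
    simp only [hw, LinearMap.prod_apply, Function.prod, LinearMap.neg_apply, Prod.ext_iff] at hx
    have hx2 : ι x = 0 := by
      have := hx.2
      rw [neg_eq_iff_eq_neg] at this
      simpa using this
    have : x = 0 := hιinj (by simpa using hx2)
    rw [this] at hx
    simpa using hx.1.symm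
  · -- surjectivity of q
    intro y
    have hmk : Function.Surjective ((LinearMap.range l).mkQ) := Submodule.mkQ_surjective _
    obtain ⟨v, hv⟩ := Finsupp.mapRange_surjective (α := M) ((LinearMap.range l).mkQ)
      (map_zero _) hmk y
    exact ⟨π (0, v), by
      simp only [hπ, Submodule.mkQ_apply, Submodule.liftQ_apply, LinearMap.comp_apply,
        LinearMap.snd_apply]
      rw [← hv]; rfl⟩
  · -- exactness in the middle
    apply le_antisymm
    · rintro _ ⟨m, rfl⟩
      simp only [LinearMap.mem_ker, LinearMap.comp_apply, LinearMap.inl_apply, hπ,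
        Submodule.mkQ_apply, Submodule.liftQ_apply, LinearMap.snd_apply]
      simp
    · rintro z hz
      obtain ⟨⟨m, v⟩, rfl⟩ := Submodule.mkQ_surjective N z
      simp only [LinearMap.mem_ker, Submodule.liftQ_apply, LinearMap.comp_apply,
        LinearMap.snd_apply] at hz
      -- each v a lies in the range of l
      have hva : ∀ a, ∃ r : R, l r = v a := by
        intro a
        have := congrArg (fun t => t a) hz
        simp only [Submodule.liftQ_apply, LinearMap.comp_apply, LinearMap.snd_apply,
          Finsupp.mapRange.linearMap_apply, Finsupp.mapRange_apply,
          Finsupp.coe_zero, Pi.zero_apply, Submodule.mkQ_apply,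
          Submodule.Quotient.mk_eq_zero, LinearMap.mem_range] at this
        exact this
      set x : M →₀ R := v.mapRange (Function.invFun (algebraMap R U)) (by
        have : (algebraMap R U) (Function.invFun (algebraMap R U) 0) = 0 :=
          Function.invFun_eq ⟨0, map_zero _⟩
        exact hinj (by simpa using this)) with hx
      have hιx : ι x = v := by
        ext a
        simp only [hι, Finsupp.mapRange.linearMap_apply, Finsupp.mapRange_apply, hx]
        obtain ⟨r, hr⟩ := hva a
        exact Function.invFun_eq ⟨r, hr⟩
      refine ⟨m + f x, ?_⟩
      simp only [LinearMap.comp_apply, LinearMap.inl_apply, hπ, Submodule.mkQ_apply]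
      rw [Submodule.Quotient.eq]
      refine ⟨x, ?_⟩
      simp [hw, hιx, Prod.ext_iff]
  · -- Z is generated by U
    refine ⟨M, π ∘ₗ LinearMap.inr R M (M →₀ U), ?_⟩
    intro z
    obtain ⟨⟨m, v⟩, rfl⟩ := Submodule.mkQ_surjective N z
    obtain ⟨x, hxm⟩ := hfsurj m
    refine ⟨v + ι x, ?_⟩
    simp only [LinearMap.comp_apply, LinearMap.inr_apply, hπ, Submodule.mkQ_apply]
    rw [Submodule.Quotient.eq]
    exact ⟨-x, by simp [hw, hxm, Prod.ext_iff]⟩
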